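/- On a flat torus 𝕋ⁿ = ℝⁿ/Λ with Λ the standard integer lattice (rescaled), a closed geodesic representing the free homotopy class (m₁,…,m_n) ∈ ℤⁿ = π₁(𝕋ⁿ), with not all m_i zero, has minimizing index equal to 2·max_i |m_i| when max_i |m_i| ≥ 1 and the torus is a product of circles each traversed m_i times; in particular, the circle factor traversed m times yields a closed geodesic of minimizing index 2m on S¹ for m ≥ 1. -/

import Mathlib

open Real

noncomputable def torusDist {ι : Type*} [Fintype ι] (r : ι → ℝ)
    (p q : ∀ i, AddCircle (2 * π * r i)) : ℝ :=
  Real.sqrt (∑ i, dist (p i) (q i) ^ 2)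

lemma dist_coe_addCircle (p x δ : ℝ) :
    dist ((x : AddCircle p)) (((x + δ : ℝ) : AddCircle p)) = ‖((δ : ℝ) : AddCircle p)‖ := by
  rw [dist_eq_norm', ← AddCircle.coe_sub]
  congr 1
  ring

lemma norm_coe_le_abs (p x : ℝ) : ‖((x : ℝ) : AddCircle p)‖ ≤ |x| := by
  simpa using QuotientAddGroup.norm_mk_le_norm (S := AddSubgroup.zmultiples p) (m := x)

/-- on the flat torus `𝕋ⁿ = Πᵢ S¹_{rᵢ}`, the closed geodesic
`γ(t) = (rᵢ mᵢ t)ᵢ` representing the free homotopy class `(m₁, …, mₙ) ∈ ℤⁿ`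
(each circle factor traversed `mᵢ ≥ 0` times, not all `mᵢ` zero), of length
`L = √(Σ (2π rᵢ mᵢ)²)`, has minimizing index `2·maxᵢ mᵢ`: i.e. `2·maxᵢ mᵢ` is
the least `k ≥ 2` with `d(γ t, γ(t + 2π/k)) = L/k` for all `t`. -/
theorem minind_flat_torus
    {ι : Type*} [Fintype ι] [Nonempty ι] (r : ι → ℝ) (hr : ∀ i, 0 < r i)
    (m : ι → ℕ) (hm : 1 ≤ Finset.univ.sup m)
    (γ : ℝ → ∀ i, AddCircle (2 * π * r i))
    (hγ : ∀ t i, γ t i = ((r i * m i * t : ℝ) : AddCircle (2 * π * r i)))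
    (L : ℝ) (hL : L = Real.sqrt (∑ i, (2 * π * r i * m i) ^ 2)) :
    IsLeast {k : ℕ | 2 ≤ k ∧
      ∀ t : ℝ, torusDist r (γ t) (γ (t + 2 * π / k)) = L / k}
      (2 * Finset.univ.sup m) := by
  set M := Finset.univ.sup m with hM
  have hMpos : (0 : ℝ) < M := by exact_mod_cast hm
  obtain ⟨i₀, -, hi₀⟩ := Finset.exists_mem_eq_sup (Finset.univ) Finset.univ_nonempty m
  have hmi₀ : ((m i₀ : ℝ)) = (M : ℝ) := by exact_mod_cast congrArg Nat.cast hi₀.symm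
  have hπ := Real.pi_pos
  have hdist : ∀ (t : ℝ) (i : ι) (s : ℝ),
      dist (γ t i) (γ (t + s) i) = ‖((r i * m i * s : ℝ) : AddCircle (2 * π * r i))‖ := by
    intro t i s
    rw [hγ, hγ]
    have : r i * ↑(m i) * (t + s) = r i * ↑(m i) * t + r i * ↑(m i) * s := by ring
    rw [this, dist_coe_addCircle]
  have hpne : ∀ i, (2 * π * r i) ≠ 0 := fun i => by have := hr i; positivity
  have hLpos : 0 < L := by
    rw [hL]
    apply Real.sqrt_pos.mpr
    apply Finset.sum_pos' (fun i _ => by positivity)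
    refine ⟨i₀, Finset.mem_univ _, ?_⟩
    have hr0 := hr i₀
    have h1 : (0:ℝ) < (m i₀ : ℝ) := by rw [hmi₀]; exact hMpos
    positivity
  constructor
  · refine ⟨by omega, fun t => ?_⟩
    have hk : ((2 * M : ℕ) : ℝ) = 2 * M := by push_cast; ring
    have hkpos : (0:ℝ) < (2 * M : ℝ) := by positivity
    have hdisti : ∀ i, dist (γ t i) (γ (t + 2 * π / (2 * M : ℕ)) i)
        = 2 * π * r i * m i / (2 * M) := by
      intro i
      rw [hdist, hk]
      have hx : r i * ↑(m i) * (2 * π / (2 * ↑M)) = 2 * π * r i * ↑(m i) / (2 * ↑M) := by ring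
      rw [hx]
      have hri := hr i
      have hxnn : (0:ℝ) ≤ 2 * π * r i * ↑(m i) / (2 * ↑M) := by positivity
      have hle : |2 * π * r i * ↑(m i) / (2 * ↑M)| ≤ |2 * π * r i| / 2 := by
        rw [abs_of_nonneg hxnn, abs_of_pos (by positivity)]
        rw [div_le_div_iff₀ (by positivity) (by norm_num)]
        have hmle : (m i : ℝ) ≤ (M : ℝ) := by
          exact_mod_cast Finset.le_sup (f := m) (Finset.mem_univ i)
        nlinarith [mul_le_mul_of_nonneg_left hmle (show (0:ℝ) ≤ 2 * π * r i by positivity)]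
      rw [(AddCircle.norm_coe_eq_abs_iff _ (hpne i)).mpr hle, abs_of_nonneg hxnn]
    unfold torusDist
    rw [hL]
    have hsq : ∑ i, dist (γ t i) (γ (t + 2 * π / (2 * M : ℕ)) i) ^ 2
        = (∑ i, (2 * π * r i * m i) ^ 2) / (2 * M : ℝ) ^ 2 := by
      rw [Finset.sum_div]
      refine Finset.sum_congr rfl fun i _ => ?_
      rw [hdisti i, div_pow]
    rw [hsq, Real.sqrt_div (Finset.sum_nonneg fun i _ => sq_nonneg _),
      Real.sqrt_sq hkpos.le, hk]
  · rintro k ⟨hk2, hkeq⟩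
    by_contra hlt
    push_neg at hlt
    have hklt : (k : ℝ) < 2 * M := by exact_mod_cast hlt
    have hkpos : (0:ℝ) < k := by
      have : 0 < k := by omega
      exact_mod_cast this
    have h0 := hkeq 0
    have hdi : ∀ i, dist (γ 0 i) (γ (0 + 2 * π / k) i)
        = ‖((2 * π * r i * m i / k : ℝ) : AddCircle (2 * π * r i))‖ := by
      intro i
      rw [hdist]
      congr 2
      ring
    have hub : ∀ i, dist (γ 0 i) (γ (0 + 2 * π / k) i) ≤ 2 * π * r i * m i / k := by
      intro i
      rw [hdi]
      refine (norm_coe_le_abs _ _).trans_eq (abs_of_nonneg ?_)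
      have := hr i; positivity
    have hub0 : dist (γ 0 i₀) (γ (0 + 2 * π / k) i₀) < 2 * π * r i₀ * m i₀ / k := by
      have hd0le : dist (γ 0 i₀) (γ (0 + 2 * π / k) i₀) ≤ π * r i₀ := by
        rw [hdi]
        refine (AddCircle.norm_le_half_period _ (hpne i₀)).trans_eq ?_
        rw [abs_of_pos (by have := hr i₀; positivity)]
        ring
      refine hd0le.trans_lt ?_
      rw [lt_div_iff₀ hkpos, hmi₀]
      have hri := hr i₀
      nlinarith [mul_lt_mul_of_pos_left hklt (show (0:ℝ) < π * r i₀ by positivity)]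
    have hsum : ∑ i, dist (γ 0 i) (γ (0 + 2 * π / k) i) ^ 2
        < ∑ i, (2 * π * r i * m i / k) ^ 2 := by
      apply Finset.sum_lt_sum (fun i _ => pow_le_pow_left₀ dist_nonneg (hub i) 2)
      exact ⟨i₀, Finset.mem_univ _, pow_lt_pow_left₀ hub0 dist_nonneg (by norm_num)⟩
    have hfin : torusDist r (γ 0) (γ (0 + 2 * π / k)) < L / k := by
      unfold torusDist
      rw [hL]
      have hLk : Real.sqrt (∑ i, (2 * π * r i * ↑(m i)) ^ 2) / k
          = Real.sqrt (∑ i, (2 * π * r i * ↑(m i) / k) ^ 2) := by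
        have h1 : ∑ i, (2 * π * r i * ↑(m i) / k) ^ 2
            = (∑ i, (2 * π * r i * ↑(m i)) ^ 2) / (k:ℝ) ^ 2 := by
          rw [Finset.sum_div]
          exact Finset.sum_congr rfl fun i _ => div_pow _ _ _
        rw [h1, Real.sqrt_div (Finset.sum_nonneg fun i _ => sq_nonneg _),
          Real.sqrt_sq hkpos.le]
      rw [hLk]
      exact Real.sqrt_lt_sqrt (Finset.sum_nonneg fun i _ => sq_nonneg _) hsum
    rw [h0] at hfin
    exact lt_irrefl _ hfin
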